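/- Every canonical tree extension Γ of a rooted DAG D satisfies L(Γ) = L(D) and deg⁺_Γ(v) ≤ deg⁺_D(v) for every vertex v. -/

import Mathlib

/-- A finite digraph on vertex type `V`. -/
structure Digr (V : Type) where
  verts : Finset V
  arcs  : Finset (V × V)
  arc_mem : ∀ a ∈ arcs, a.1 ∈ verts ∧ a.2 ∈ verts ∧ a.1 ≠ a.2

namespace Digr

variable {V : Type} [DecidableEq V]

def Adj (D : Digr V) (u v : V) : Prop := (u, v) ∈ D.arcs

def Reach (D : Digr V) : V → V → Prop := Relation.ReflTransGen D.Adj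

def SReach (D : Digr V) : V → V → Prop := Relation.TransGen D.Adj

def Acyclic (D : Digr V) : Prop := ∀ v, ¬ D.SReach v v

def inDeg (D : Digr V) (v : V) : ℕ := (D.arcs.filter fun a => a.2 = v).card

def outDeg (D : Digr V) (v : V) : ℕ := (D.arcs.filter fun a => a.1 = v).card

def maxOutDeg (D : Digr V) : ℕ := D.verts.sup D.outDeg

def IsRoot (D : Digr V) (v : V) : Prop := v ∈ D.verts ∧ D.inDeg v = 0

/-- A rooted DAG: acyclic with exactly one root. -/
def Rooted (D : Digr V) : Prop := D.Acyclic ∧ ∃! r, D.IsRoot r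

/-- A rooted DAG all of whose vertices are reachable from the root. -/
def RootedConn (D : Digr V) : Prop :=
  D.Acyclic ∧ ∃ r, D.IsRoot r ∧ ∀ v ∈ D.verts, D.Reach r v

def leaves (D : Digr V) : Set V := {v | v ∈ D.verts ∧ D.outDeg v = 0}

/-- An out-tree: a rooted DAG in which every vertex has in-degree at most 1. -/
def IsOutTree (D : Digr V) : Prop := D.Rooted ∧ ∀ v ∈ D.verts, D.inDeg v ≤ 1

/-- `Γ` is a tree extension of `D`. -/
def IsTreeExt (D Γ : Digr V) : Prop :=
  Γ.IsOutTree ∧ Γ.verts = D.verts ∧ ∀ a ∈ D.arcs, Γ.SReach a.1 a.2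

/-- `GW_t(Γ) = {(u,v) ∈ A(D) | u >_Γ t ≥_Γ v}`. -/
def GW (D Γ : Digr V) (t : V) : Set (V × V) :=
  {a | a ∈ D.arcs ∧ Γ.SReach a.1 t ∧ Γ.Reach t a.2}

/-- `HW_t(Γ) = {(u,v) ∈ A(D) | u ≥_Γ t >_Γ v}`. -/
def HW (D Γ : Digr V) (t : V) : Set (V × V) :=
  {a | a ∈ D.arcs ∧ Γ.Reach a.1 t ∧ Γ.SReach t a.2}

/-- `sw_D(Γ)`. -/
noncomputable def swOf (D Γ : Digr V) : ℕ := Γ.verts.sup fun t => (GW D Γ t).ncard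

/-- The scanwidth of `D`: minimum width over all tree extensions. -/
noncomputable def scanwidth (D : Digr V) : ℕ :=
  sInf {k | ∃ Γ : Digr V, IsTreeExt D Γ ∧ swOf D Γ = k}

/-- The subgraph of `D` induced by `U` is weakly connected. -/
def WConnOn (D : Digr V) (U : Set V) : Prop :=
  ∀ u ∈ U, ∀ v ∈ U, Relation.ReflTransGen
    (fun a b => a ∈ U ∧ b ∈ U ∧ ((a, b) ∈ D.arcs ∨ (b, a) ∈ D.arcs)) u v

/-- A canonical tree extension of `D`. -/
def Canonical (D Γ : Digr V) : Prop :=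
  IsTreeExt D Γ ∧ ∀ t ∈ Γ.verts, D.WConnOn {v | Γ.Reach t v}

/-- Phylogenetic network: rooted DAG whose root has out-degree ≥ 2 and each
non-root vertex has in-degree 1 or out-degree 1, but not both. -/
def IsNetwork (N : Digr V) : Prop :=
  N.Rooted ∧ ∀ r, N.IsRoot r → 2 ≤ N.outDeg r ∧
    ∀ v ∈ N.verts, v ≠ r → Xor' (N.inDeg v = 1) (N.outDeg v = 1)

/-- Phylogenetic tree: a network without reticulations. -/
def IsPhyloTree (T : Digr V) : Prop := T.IsNetwork ∧ ∀ v ∈ T.verts, T.inDeg v ≤ 1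

def BinaryD (D : Digr V) : Prop := ∀ v ∈ D.verts, D.inDeg v ≤ 2 ∧ D.outDeg v ≤ 2

/-- One in-splitting step. -/
def InSplit (D D' : Digr V) : Prop :=
  ∃ v u w x, 3 ≤ D.inDeg v ∧ (u, v) ∈ D.arcs ∧ (w, v) ∈ D.arcs ∧ u ≠ w ∧
    x ∉ D.verts ∧ D'.verts = insert x D.verts ∧
    D'.arcs = insert (u, x) (insert (w, x) (insert (x, v)
      ((D.arcs.erase (u, v)).erase (w, v))))

/-- One out-splitting step. -/
def OutSplit (D D' : Digr V) : Prop :=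
  ∃ v u w x, 3 ≤ D.outDeg v ∧ (v, u) ∈ D.arcs ∧ (v, w) ∈ D.arcs ∧ u ≠ w ∧
    x ∉ D.verts ∧ D'.verts = insert x D.verts ∧
    D'.arcs = insert (v, x) (insert (x, u) (insert (x, w)
      ((D.arcs.erase (v, u)).erase (v, w))))

/-- Binary in-resolution: exhaustive in-splitting. -/
def BinInRes (D D' : Digr V) : Prop :=
  Relation.ReflTransGen InSplit D D' ∧ ∀ v ∈ D'.verts, D'.inDeg v ≤ 2

/-- Binary out-resolution: exhaustive out-splitting. -/
def BinOutRes (D D' : Digr V) : Prop :=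
  Relation.ReflTransGen OutSplit D D' ∧ ∀ v ∈ D'.verts, D'.outDeg v ≤ 2

/-- Binary resolution: binary out-resolution of a binary in-resolution. -/
def BinRes (D D' : Digr V) : Prop := ∃ D'' : Digr V, BinInRes D D'' ∧ BinOutRes D'' D'

def SubD (D' D : Digr V) : Prop := D'.verts ⊆ D.verts ∧ D'.arcs ⊆ D.arcs

/-- Leaf-monotone subdigraph. -/
def LeafMono (D' D : Digr V) : Prop := SubD D' D ∧ D'.leaves ⊆ D.leaves

/-- One arc subdivision step. -/
def SubdivStep (D D' : Digr V) : Prop :=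
  ∃ u v w, (u, v) ∈ D.arcs ∧ w ∉ D.verts ∧ D'.verts = insert w D.verts ∧
    D'.arcs = insert (u, w) (insert (w, v) (D.arcs.erase (u, v)))

/-- `D'` is a subdivision of `D`. -/
def IsSubdivisionOf (D' D : Digr V) : Prop := Relation.ReflTransGen SubdivStep D D'

/-- Leaf-respecting isomorphism. -/
def LeafIso (D D' : Digr V) : Prop :=
  ∃ ι : V → V, Set.BijOn ι ↑D.verts ↑D'.verts ∧
    (∀ u v, u ∈ D.verts → v ∈ D.verts → ((u, v) ∈ D.arcs ↔ (ι u, ι v) ∈ D'.arcs)) ∧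
    ∀ ℓ ∈ D.leaves, ι ℓ = ℓ

/-- `N` firmly displays `T`. -/
def FirmDisp (N T : Digr V) : Prop :=
  ∃ T' N' : Digr V, IsSubdivisionOf T' T ∧ LeafMono N' N ∧ LeafIso T' N'

/-- `N` softly displays `T`. -/
def SoftDisp (N T : Digr V) : Prop :=
  ∃ N' T' : Digr V, BinRes N N' ∧ BinRes T T' ∧ FirmDisp N' T'

def arcsOfList (l : List V) : List (V × V) := l.zip l.tail

def firstArc (l : List V) : Option (V × V) :=
  match l with
  | a :: b :: _ => some (a, b)
  | _ => none

/-- `l` is (the vertex list of) a directed path in `D`. -/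
def IsPathList (D : Digr V) (l : List V) : Prop :=
  l ≠ [] ∧ l.Nodup ∧ (∀ v ∈ l, v ∈ D.verts) ∧ l.Chain' D.Adj

/-- Eventual arc-disjointness of two paths (as vertex lists). -/
def EAD : List V → List V → Prop
  | a :: b :: p, q =>
      2 ≤ q.length ∧
        (List.Disjoint (arcsOfList (a :: b :: p)) (arcsOfList q) ∨
          (some a = q.head? ∧ EAD (b :: p) q.tail))
  | _, _ => False

/-- Soft pseudo-embedding of the set of arcs `F` (of a forest in `T`) into `N`. -/
structure IsSPE (N T : Digr V) (F : Set (V × V)) (φ : V × V → List V) : Prop where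
  path : ∀ a ∈ F, IsPathList N (φ a) ∧ 2 ≤ (φ a).length
  spe1 : ∀ x y z, (x, y) ∈ F → (y, z) ∈ F →
    (φ (x, y)).getLast? = (φ (y, z)).head?
  spe2 : ∀ x y x' y', (x, y) ∈ F → (x', y') ∈ F → x ≠ x' →
    List.Disjoint (arcsOfList (φ (x, y))) (arcsOfList (φ (x', y')))
  spe3 : ∀ x y y', (x, y) ∈ F → (x, y') ∈ F → y ≠ y' → EAD (φ (x, y)) (φ (x, y'))
  spe4 : ∀ x ℓ, (x, ℓ) ∈ F → ℓ ∈ T.leaves → (φ (x, ℓ)).getLast? = some ℓ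

/-- The downward-closed forest below a top-arc set `S`. -/
def ForestBelow (T : Digr V) (S : Set (V × V)) : Set (V × V) :=
  S ∪ {b | b ∈ T.arcs ∧ ∃ a ∈ S, T.Reach a.2 b.1}

/-- `S` is a top-arc set (an arc set whose tails have in-degree 0 in the forest below). -/
def IsTopArcSet (T : Digr V) (S : Set (V × V)) : Prop :=
  S ⊆ ↑T.arcs ∧ ∀ a ∈ S, ∀ b ∈ ForestBelow T S, b.2 ≠ a.1

def forestLeaves (T : Digr V) (S : Set (V × V)) : Set V :=
  {x | x ∈ T.leaves ∧ ∃ a ∈ ForestBelow T S, a.2 = x}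

/-- Signature `[B, S, ψ]` (with `ψ` represented as an `Option`-valued map with support `S`). -/
def IsSig (N T : Digr V) (B S : Set (V × V)) (ψ : V × V → Option (V × V)) : Prop :=
  B ⊆ ↑N.arcs ∧ IsTopArcSet T S ∧
    forestLeaves T S = {ℓ | ℓ ∈ N.leaves ∧ ∃ a ∈ B, N.Reach a.2 ℓ} ∧
    (∀ a ∈ S, ∃ b ∈ B, ψ a = some b) ∧ ∀ a, a ∉ S → ψ a = none

/-- Valid signature `[B, S, ψ]`. -/
def ValidSig (N T : Digr V) (B S : Set (V × V)) (ψ : V × V → Option (V × V)) : Prop :=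
  IsSig N T B S ψ ∧
    ∃ φ : V × V → List V, IsSPE N T (ForestBelow T S) φ ∧
      ∀ a ∈ S, firstArc (φ a) = ψ a

/-- Restriction of (the `Option`-valued) `ψ` to `S`. -/
noncomputable def restrictPsi (ψ : V × V → Option (V × V)) (S : Set (V × V)) :
    V × V → Option (V × V) := fun a =>
  @ite _ (a ∈ S) (Classical.propDecidable _) (ψ a) none

/-- Downward-closed set of arcs of `T`. -/
def DownClosed (T : Digr V) (F : Set (V × V)) : Prop :=
  F ⊆ ↑T.arcs ∧ ∀ a ∈ F, ∀ b ∈ T.arcs, T.Reach a.2 b.1 → b ∈ F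

/-- `D'` arises from `D` by attaching a new root `ρ` above the old root. -/
def AttachRoot (D : Digr V) (ρ : V) (D' : Digr V) : Prop :=
  ρ ∉ D.verts ∧ D'.verts = insert ρ D.verts ∧
    ∃ r, D.IsRoot r ∧ D'.arcs = insert (ρ, r) D.arcs

/-- Assumption (as:NTGamma): `Ns` binary network, `Ts` tree with the same leaves,
`N` and `T` obtained by attaching new roots `ρN`, `ρT`. -/
def PaperSetup (Ns Ts N T : Digr V) (ρN ρT : V) : Prop :=
  Ns.IsNetwork ∧ BinaryD Ns ∧ IsPhyloTree Ts ∧ Ts.leaves = Ns.leaves ∧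
    AttachRoot Ns ρN N ∧ AttachRoot Ts ρT T

/-! ### Stretch gadget (Definition 8, full version) -/

def UdomS (d : ℕ) : Set (ℕ × ℕ) :=
  {p | (2 ≤ p.1 ∧ p.1 ≤ d - 1 ∧ 1 ≤ p.2 ∧ p.2 ≤ p.1) ∨
    (p.1 = d ∧ 2 ≤ p.2 ∧ p.2 ≤ d - 1)}

def UPdomS (d : ℕ) : Set (ℕ × ℕ) :=
  {p | 3 ≤ p.1 ∧ p.1 ≤ d - 1 ∧ 2 ≤ p.2 ∧ p.2 ≤ p.1 - 1}

def WdomS (d : ℕ) : Set (ℕ × ℕ × ℕ) :=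
  {p | 1 ≤ p.1 ∧ p.1 ≤ d - 1 ∧ 1 ≤ p.2.1 ∧ p.2.1 ≤ d - 1 ∧ 1 ≤ p.2.2 ∧ p.2.2 ≤ 4}

/-- The arc set of the network obtained from `D` by stretching `v`. -/
def stretchArcs (D : Digr V) (v : V) (d : ℕ) (c : ℕ → V)
    (u u' : ℕ → ℕ → V) (w : ℕ → ℕ → ℕ → V) : Set (V × V) :=
  ((D.arcs : Set (V × V)) \ {a | a.1 = v}) ∪
  ({(v, u 2 1), (v, u 2 2)} : Set (V × V)) ∪
  {a | ∃ i, 2 ≤ i ∧ i ≤ d - 2 ∧ (a = (u i 1, u (i+1) 1) ∨ a = (u i 1, u (i+1) 2))} ∪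
  {a | ∃ i, 2 ≤ i ∧ i ≤ d - 2 ∧ (a = (u i i, u (i+1) i) ∨ a = (u i i, u (i+1) (i+1)))} ∪
  {a | ∃ i j, 3 ≤ i ∧ i ≤ d - 1 ∧ 2 ≤ j ∧ j ≤ i - 1 ∧ a = (u i j, u' i j)} ∪
  {a | ∃ i j, 3 ≤ i ∧ i ≤ d - 1 ∧ 2 ≤ j ∧ j ≤ i - 1 ∧
      (a = (u' i j, u (i+1) j) ∨ a = (u' i j, u (i+1) (j+1)))} ∪
  ({(u (d-1) 1, w 1 1 1), (u (d-1) 1, u d 2)} : Set (V × V)) ∪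
  ({(u (d-1) (d-1), u d (d-1)), (u (d-1) (d-1), w 1 (d-1) 2)} : Set (V × V)) ∪
  {a | ∃ j, 2 ≤ j ∧ j ≤ d - 1 ∧ a = (u d j, w 1 (j-1) 2)} ∪
  {a | ∃ i j, 1 ≤ i ∧ i ≤ d - 1 ∧ 1 ≤ j ∧ j ≤ d - 1 ∧
      (a = (w i j 1, w i j 3) ∨ a = (w i j 1, w i j 4) ∨
        a = (w i j 2, w i j 3) ∨ a = (w i j 2, w i j 4))} ∪
  {a | ∃ i j, 1 ≤ i ∧ i ≤ d - 1 ∧ 1 ≤ j ∧ j ≤ d - 2 ∧ a = (w i j 4, w i (j+1) 1)} ∪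
  {a | ∃ i, 1 ≤ i ∧ i ≤ d - 2 ∧ a = (w i 1 3, w (i+1) 1 1)} ∪
  {a | ∃ i, 1 ≤ i ∧ i ≤ d - 2 ∧ a = (w i (d-1) 4, w (i+1) (d-1) 2)} ∪
  {a | ∃ i j, 1 ≤ i ∧ i ≤ d - 2 ∧ 2 ≤ j ∧ j ≤ d - 1 ∧ a = (w i j 3, w (i+1) (j-1) 2)} ∪
  {a | ∃ j, 1 ≤ j ∧ j ≤ d - 1 ∧ a = (w (d-1) j 3, c j)} ∪
  {(w (d-1) (d-1) 4, c d)}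

/-- `D'` arises from `D` by stretching the vertex `v` (of out-degree `d ≥ 3`). -/
def StretchV (D : Digr V) (v : V) (D' : Digr V) : Prop :=
  ∃ (d : ℕ) (c : ℕ → V) (u u' : ℕ → ℕ → V) (w : ℕ → ℕ → ℕ → V),
    d = D.outDeg v ∧ 3 ≤ d ∧
    Set.BijOn c (Set.Icc 1 d) {x | (v, x) ∈ D.arcs} ∧
    Set.InjOn (fun p => u p.1 p.2) (UdomS d) ∧
    Set.InjOn (fun p => u' p.1 p.2) (UPdomS d) ∧
    Set.InjOn (fun p => w p.1 p.2.1 p.2.2) (WdomS d) ∧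
    (∀ p ∈ UdomS d, u p.1 p.2 ∉ D.verts) ∧
    (∀ p ∈ UPdomS d, u' p.1 p.2 ∉ D.verts) ∧
    (∀ p ∈ WdomS d, w p.1 p.2.1 p.2.2 ∉ D.verts) ∧
    (∀ p ∈ UdomS d, ∀ q ∈ UPdomS d, u p.1 p.2 ≠ u' q.1 q.2) ∧
    (∀ p ∈ UdomS d, ∀ q ∈ WdomS d, u p.1 p.2 ≠ w q.1 q.2.1 q.2.2) ∧
    (∀ p ∈ UPdomS d, ∀ q ∈ WdomS d, u' p.1 p.2 ≠ w q.1 q.2.1 q.2.2) ∧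
    ((D'.verts : Set V) =
      (D.verts : Set V) ∪ (fun p : ℕ × ℕ => u p.1 p.2) '' UdomS d ∪
        (fun p : ℕ × ℕ => u' p.1 p.2) '' UPdomS d ∪
        (fun p : ℕ × ℕ × ℕ => w p.1 p.2.1 p.2.2) '' WdomS d) ∧
    (D'.arcs : Set (V × V)) = stretchArcs D v d c u u' w

def StretchStep (D D' : Digr V) : Prop :=
  ∃ v ∈ D.verts, 3 ≤ D.outDeg v ∧ StretchV D v D'

/-- `N'` is `str(N)`: obtained by exhaustively stretching all vertices of
out-degree at least 3. -/
def IsStretch (N N' : Digr V) : Prop :=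
  Relation.ReflTransGen StretchStep N N' ∧ ∀ v ∈ N'.verts, N'.outDeg v ≤ 2

/-! ### Level -/

def underSG (D : Digr V) : SimpleGraph V :=
  SimpleGraph.fromRel fun a b => (a, b) ∈ D.arcs

/-- Two edges of the underlying graph lie in the same biconnected component. -/
def SameBlock (D : Digr V) (e f : Sym2 V) : Prop :=
  e = f ∨ ∃ (x : V) (wlk : (underSG D).Walk x x),
    wlk.IsCycle ∧ e ∈ wlk.edges ∧ f ∈ wlk.edges

def IsReticulation (D : Digr V) (v : V) : Prop := v ∈ D.verts ∧ 2 ≤ D.inDeg v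

/-- `D` has level at most `c`: each biconnected component of the underlying graph
contains at most `c` reticulations. -/
def LevelAtMost (D : Digr V) (c : ℕ) : Prop :=
  ∀ e ∈ (underSG D).edgeSet,
    {v | IsReticulation D v ∧
      ∃ f ∈ (underSG D).edgeSet, SameBlock D e f ∧ v ∈ f}.ncard ≤ c

end Digr

open Digr

section Stmt13Aux
variable {V : Type} [DecidableEq V]

lemma uniqueParent {Γ : Digr V} (hin : ∀ v ∈ Γ.verts, Γ.inDeg v ≤ 1)
    {c c' b : V} (h1 : (c, b) ∈ Γ.arcs) (h2 : (c', b) ∈ Γ.arcs) : c = c' := by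
  by_contra hne
  have hb : b ∈ Γ.verts := (Γ.arc_mem _ h1).2.1
  have hle := hin b hb
  have hsub : ({(c, b), (c', b)} : Finset (V × V)) ⊆ Γ.arcs.filter (fun a => a.2 = b) := by
    intro a ha
    simp only [Finset.mem_insert, Finset.mem_singleton] at ha
    rcases ha with rfl | rfl <;> simp [h1, h2]
  have h2le : 2 ≤ Γ.inDeg b := by
    have := Finset.card_le_card hsub
    rwa [Finset.card_insert_of_notMem (by simp [hne]), Finset.card_singleton] at this
  omega

lemma reach_total {Γ : Digr V} (hin : ∀ v ∈ Γ.verts, Γ.inDeg v ≤ 1)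
    {a a' b : V} (h : Γ.Reach a b) (h' : Γ.Reach a' b) :
    Γ.Reach a a' ∨ Γ.Reach a' a := by
  induction h with
  | refl => exact Or.inr h'
  | @tail c b hac hcb ih =>
    rcases Relation.ReflTransGen.cases_tail h' with rfl | ⟨d, had, hdb⟩
    · exact Or.inl (hac.tail hcb)
    · exact ih (by rwa [uniqueParent hin hdb hcb] at had)

lemma reach_antisymm {Γ : Digr V} (hac : Γ.Acyclic) {a b : V}
    (h1 : Γ.Reach a b) (h2 : Γ.Reach b a) : a = b := by
  by_contra hne
  rcases Relation.ReflTransGen.cases_head h1 with rfl | ⟨c, hc, hcb⟩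
  · exact hne rfl
  · exact hac a (Relation.TransGen.head' hc (hcb.trans h2))

omit [DecidableEq V] in
lemma cross_step {r : V → V → Prop} {P : V → Prop} {u w : V}
    (h : Relation.ReflTransGen r u w) (hu : ¬ P u) (hw : P w) :
    ∃ x y, r x y ∧ ¬ P x ∧ P y := by
  induction h with
  | refl => exact absurd hw hu
  | @tail c b huc hcb ih =>
    by_cases hc : P c
    · exact ih hc
    · exact ⟨c, b, hcb, hc, hw⟩

/-- Key lemma: for each Γ-child `c` of `v`, there is a `D`-arc from `v` into
the Γ-subtree below `c`. -/
lemma child_arc {D Γ : Digr V} (hcan : Canonical D Γ) {v c : V}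
    (harc : (v, c) ∈ Γ.arcs) : ∃ y, (v, y) ∈ D.arcs ∧ Γ.Reach c y := by
  obtain ⟨⟨⟨⟨hacyc, _⟩, hin⟩, hverts, hsr⟩, hwc⟩ := hcan
  have hv : v ∈ Γ.verts := (Γ.arc_mem _ harc).1
  have hvc : Γ.Adj v c := harc
  have hnotPv : ¬ Γ.Reach c v := fun h => hacyc v (Relation.TransGen.head' hvc h)
  have hwalk := hwc v hv v (Relation.ReflTransGen.refl)
      c (Relation.ReflTransGen.single hvc)
  obtain ⟨x, y, ⟨hxU, hyU, hor⟩, hxnc, hyc⟩ :=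
    cross_step (P := fun w => Γ.Reach c w) hwalk hnotPv Relation.ReflTransGen.refl
  rcases hor with hxy | hyx
  · -- (x, y) ∈ D.arcs
    have hxy' : Γ.Reach x y := (hsr _ hxy).to_reflTransGen
    rcases reach_total hin hxy' hyc with hxc | hcx
    · -- Γ.Reach x c
      rcases Relation.ReflTransGen.cases_tail hxc with rfl | ⟨d, hxd, hdc⟩
      · exact absurd Relation.ReflTransGen.refl hxnc
      · have hdv : d = v := uniqueParent hin hdc hvc
        have hvx : Γ.Reach v x := hxU
        have hxv : x = v := reach_antisymm hacyc (hdv ▸ hxd) hvx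
        exact ⟨y, hxv ▸ hxy, hyc⟩
    · exact absurd hcx hxnc
  · -- (y, x) ∈ D.arcs
    have : Γ.Reach y x := (hsr _ hyx).to_reflTransGen
    exact absurd (hyc.trans this) hxnc

lemma outDeg_le {D Γ : Digr V} (hcan : Canonical D Γ) (v : V) :
    Γ.outDeg v ≤ D.outDeg v := by
  classical
  have hacyc : Γ.Acyclic := hcan.1.1.1.1
  have hin : ∀ u ∈ Γ.verts, Γ.inDeg u ≤ 1 := hcan.1.1.2
  -- disjointness of the subtrees below distinct children
  have hdisj : ∀ c c' : V, (v, c) ∈ Γ.arcs → (v, c') ∈ Γ.arcs → c ≠ c' →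
      ∀ x, Γ.Reach c x → Γ.Reach c' x → False := by
    intro c c' hc hc' hne x h1 h2
    have key : ∀ a b : V, (v, a) ∈ Γ.arcs → (v, b) ∈ Γ.arcs → a ≠ b →
        Γ.Reach a b → False := by
      intro a b ha hb hab hr
      rcases Relation.ReflTransGen.cases_tail hr with rfl | ⟨d, had, hdb⟩
      · exact hab rfl
      · have hdv : d = v := uniqueParent hin hdb hb
        exact hacyc v (Relation.TransGen.head' ha (hdv ▸ had))
    rcases reach_total hin h1 h2 with h | h
    · exact key c c' hc hc' hne h
    · exact key c' c hc' hc (Ne.symm hne) h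
  -- choose, for each child arc, a D-arc into the subtree
  choose! y hy using fun (c : V) (h : (v, c) ∈ Γ.arcs) => child_arc hcan h
  unfold outDeg
  apply Finset.card_le_card_of_injOn (fun a => (v, y a.2))
  · rintro ⟨a1, a2⟩ ha
    simp only [Finset.coe_filter, Finset.mem_filter, Set.mem_setOf_eq, Finset.mem_coe] at ha ⊢
    obtain ⟨harc, h1⟩ := ha
    subst h1
    exact ⟨(hy a2 harc).1, trivial⟩
  · rintro ⟨a1, a2⟩ ha ⟨b1, b2⟩ hb hab
    simp only [Finset.mem_filter, Finset.mem_coe] at ha hb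
    obtain ⟨ha, h1⟩ := ha
    obtain ⟨hb, h2⟩ := hb
    subst h1; subst h2
    have hy2 : y a2 = y b2 := by simpa using congrArg Prod.snd hab
    have h22 : a2 = b2 := by
      by_contra hne
      exact hdisj a2 b2 ha hb hne (y a2) (hy a2 ha).2 (hy2 ▸ (hy b2 hb).2)
    rw [h22]

end Stmt13Aux


/-- a canonical tree extension has the same leaves as `D` and no
larger out-degrees. -/
theorem stmt13 {V : Type} [DecidableEq V] (D Γ : Digr V)
    (hD : D.RootedConn) (hcan : Canonical D Γ) :
    Γ.leaves = D.leaves ∧ ∀ v ∈ Γ.verts, Γ.outDeg v ≤ D.outDeg v := by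
  constructor
  · ext v
    constructor
    · rintro ⟨hv, hdeg⟩
      refine ⟨hcan.1.2.1 ▸ hv, ?_⟩
      by_contra hne
      obtain ⟨a, ha⟩ := Finset.card_pos.mp (Nat.pos_of_ne_zero (hne : D.outDeg v ≠ 0))
      simp only [Finset.mem_filter] at ha
      have hsr : Γ.SReach a.1 a.2 := hcan.1.2.2 a ha.1
      rw [ha.2] at hsr
      obtain ⟨z, hz, _⟩ := Relation.TransGen.head'_iff.mp hsr
      have hmem : (v, z) ∈ Γ.arcs.filter (fun a => a.1 = v) := by
        simp only [Finset.mem_filter]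
        exact ⟨hz, trivial⟩
      have := Finset.card_pos.mpr ⟨_, hmem⟩
      unfold Digr.outDeg at hdeg
      omega
    · rintro ⟨hv, hdeg⟩
      refine ⟨hcan.1.2.1 ▸ hv, ?_⟩
      have := outDeg_le hcan v
      omega
  · intro v _
    exact outDeg_le hcan v
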